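/- Let x₀, x ∈ ℝ² with x ≠ x₀, let c : ℝ² → ℝ be differentiable at x with c(x₀ + t • (x − x₀)) = c(x) for all real t > 0, and define φ(z) = c(z) · ‖z − x₀‖². Then φ is differentiable at x, ∇φ(x) = 2 c(x) (x − x₀) + ‖x − x₀‖² ∇c(x), and ‖∇φ(x)‖² = 4 c(x)² ‖x − x₀‖² + ‖x − x₀‖⁴ ‖∇c(x)‖²; in particular ‖∇φ(x)‖ ≥ 2 |c(x)| ‖x − x₀‖. -/

import Mathlib

open RealInnerProductSpace

theorem gradient_weight_decomposition
    (x₀ x : EuclideanSpace ℝ (Fin 2)) (hx : x ≠ x₀)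
    (c : EuclideanSpace ℝ (Fin 2) → ℝ) (hc : DifferentiableAt ℝ c x)
    (hray : ∀ t : ℝ, 0 < t → c (x₀ + t • (x - x₀)) = c x) :
    DifferentiableAt ℝ (fun z => c z * ‖z - x₀‖ ^ 2) x ∧
    gradient (fun z => c z * ‖z - x₀‖ ^ 2) x
      = (2 * c x) • (x - x₀) + (‖x - x₀‖ ^ 2) • gradient c x ∧
    ‖gradient (fun z => c z * ‖z - x₀‖ ^ 2) x‖ ^ 2
      = 4 * c x ^ 2 * ‖x - x₀‖ ^ 2 + ‖x - x₀‖ ^ 4 * ‖gradient c x‖ ^ 2 ∧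
    2 * |c x| * ‖x - x₀‖ ≤ ‖gradient (fun z => c z * ‖z - x₀‖ ^ 2) x‖ := by
  set v := x - x₀ with hv
  set G := gradient c x with hG
  have hGf : ∀ y, ⟪G, y⟫ = fderiv ℝ c x y := by
    intro y
    have h1 : (InnerProductSpace.toDual ℝ (EuclideanSpace ℝ (Fin 2))) G = fderiv ℝ c x := by
      rw [hG, gradient]; exact (LinearIsometryEquiv.apply_symm_apply _ _)
    have := congrArg (fun L : StrongDual ℝ (EuclideanSpace ℝ (Fin 2)) => L y) h1
    simpa [InnerProductSpace.toDual_apply_apply] using this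
  -- derivative of the norm-squared part
  have hg : HasFDerivAt (fun z : EuclideanSpace ℝ (Fin 2) => ‖z - x₀‖ ^ 2)
      (2 • ((innerSL ℝ) x - (innerSL ℝ) x₀)) x := by
    have := ((hasFDerivAt_id x).sub_const x₀).norm_sq
    simpa using this
  -- orthogonality: fderiv c x v = 0
  have horth : fderiv ℝ c x v = 0 := by
    have hL : HasDerivAt (fun t : ℝ => x₀ + t • v) v 1 := by
      simpa using ((hasDerivAt_id (1:ℝ)).smul_const v).const_add x₀
    have hx1 : x₀ + (1:ℝ) • v = x := by simp [hv]
    have hcf : HasFDerivAt c (fderiv ℝ c x) (x₀ + (1:ℝ) • v) := hx1 ▸ hc.hasFDerivAt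
    have hcomp : HasDerivAt (fun t : ℝ => c (x₀ + t • v)) (fderiv ℝ c x v) 1 :=
      hcf.comp_hasDerivAt 1 hL
    have hconst : (fun t : ℝ => c (x₀ + t • v)) =ᶠ[nhds (1:ℝ)] (fun _ => c x) := by
      filter_upwards [eventually_gt_nhds (by norm_num : (0:ℝ) < 1)] with t ht
      exact hray t ht
    have h0 : HasDerivAt (fun _ : ℝ => c x) (fderiv ℝ c x v) 1 :=
      hcomp.congr_of_eventuallyEq hconst.symm
    exact h0.unique (hasDerivAt_const _ _)
  have hinner : ⟪G, v⟫ = 0 := (hGf v).trans horth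
  have hc2 : ⟪v, G⟫ = 0 := by rw [real_inner_comm]; exact hinner
  -- product rule
  have hprod : HasFDerivAt (fun z => c z * ‖z - x₀‖ ^ 2)
      (c x • 2 • ((innerSL ℝ) x - (innerSL ℝ) x₀) + ‖x - x₀‖ ^ 2 • fderiv ℝ c x) x := by
    have := hc.hasFDerivAt.mul hg
    exact this
  have hgrad : HasGradientAt (fun z => c z * ‖z - x₀‖ ^ 2)
      ((2 * c x) • v + (‖v‖ ^ 2) • G) x := by
    rw [hasGradientAt_iff_hasFDerivAt]
    refine hprod.congr_fderiv (Eq.symm ?_)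
    refine ContinuousLinearMap.ext fun y => ?_
    simp only [InnerProductSpace.toDual_apply_apply, inner_add_left, real_inner_smul_left,
      ContinuousLinearMap.add_apply, ContinuousLinearMap.smul_apply,
      ContinuousLinearMap.sub_apply, innerSL_apply_apply, hGf y, hv]
    rw [← hv]
    simp only [hv, inner_sub_left, smul_eq_mul]
    ring
  refine ⟨hgrad.differentiableAt, hgrad.gradient, ?_, ?_⟩
  · rw [hgrad.gradient]
    rw [norm_add_sq_real]
    rw [real_inner_smul_left, real_inner_smul_right, hc2]
    simp [norm_smul, mul_pow, abs_mul, sq_abs]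
    ring
  · rw [hgrad.gradient]
    have h2 : (2 * |c x| * ‖v‖) ^ 2 ≤ ‖(2 * c x) • v + (‖v‖ ^ 2) • G‖ ^ 2 := by
      rw [norm_add_sq_real, real_inner_smul_left, real_inner_smul_right, hc2]
      have h1 : ‖(2 * c x) • v‖ ^ 2 = (2 * |c x| * ‖v‖) ^ 2 := by
        simp [norm_smul, mul_pow, abs_mul, sq_abs]
      nlinarith [sq_nonneg (‖(‖v‖ ^ 2) • G‖)]
    have hnn : 0 ≤ 2 * |c x| * ‖v‖ := by positivity
    exact (pow_le_pow_iff_left₀ hnn (norm_nonneg _) two_ne_zero).mp h2
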